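/- (Wan's bound) Let f ∈ F_q[x] have positive degree n. If f is not a permutation polynomial of F_q, then the size of the value set V_f = {f(c) : c ∈ F_q} satisfies |V_f| ≤ q - ⌈(q-1)/n⌉. -/

import Mathlib

open Polynomial Finset

/-- In a finite field of cardinality `q`, the binomial coefficients `q.choose k`
vanish for `0 < k < q`. -/
lemma wan_cast_choose_eq_zero {F : Type*} [Field F] [Fintype F] {k : ℕ} (hk0 : k ≠ 0)
    (hk : k < Fintype.card F) : ((Fintype.card F).choose k : F) = 0 := by
  obtain ⟨p, hC⟩ := CharP.exists F
  haveI := hC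
  obtain ⟨m, hp, hq⟩ := FiniteField.card F p
  rw [CharP.cast_eq_zero_iff F p]
  rw [hq] at hk ⊢
  exact hp.dvd_choose_pow hk0 hk.ne

/-- The elementary symmetric functions of the values of a polynomial of degree `n`
vanish in degrees `k` with `k * n < q - 1`. -/
lemma wan_esymm_eq_zero {F : Type*} [Field F] [Fintype F] [DecidableEq F]
    (f : F[X]) {k : ℕ} (hn : 0 < f.natDegree) (hk0 : 0 < k)
    (hkn : k * f.natDegree < Fintype.card F - 1) :
    ∑ S ∈ Finset.univ.powersetCard k, ∏ c ∈ S, f.eval c = 0 := by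
  set q := Fintype.card F with hq
  have hq2 : 1 < q := Fintype.one_lt_card
  set n := f.natDegree with hns
  set P : F[X] := ∑ S ∈ Finset.univ.powersetCard k, ∏ c ∈ S, f.comp (C c * X) with hP
  have hPdeg : P.natDegree ≤ k * n := by
    apply Polynomial.natDegree_sum_le_of_forall_le
    intro S hS
    refine le_trans (Polynomial.natDegree_prod_le _ _) ?_
    have hcard : S.card = k := (Finset.mem_powersetCard_univ.mp hS)
    calc ∑ c ∈ S, (f.comp (C c * X)).natDegree
        ≤ ∑ _c ∈ S, n := by
          refine Finset.sum_le_sum fun c _ => ?_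
          rw [Polynomial.natDegree_comp]
          calc f.natDegree * (C c * X).natDegree ≤ f.natDegree * 1 := by
                exact Nat.mul_le_mul_left _
                  (le_trans (Polynomial.natDegree_C_mul_le _ _) (le_of_eq Polynomial.natDegree_X))
            _ = n := by rw [mul_one]
      _ = k * n := by rw [Finset.sum_const, smul_eq_mul, hcard]
  set e := ∑ S ∈ Finset.univ.powersetCard k, ∏ c ∈ S, f.eval c with he
  have heval : ∀ l : F, l ≠ 0 → P.eval l = e := by
    intro l hl
    rw [hP, Polynomial.eval_finset_sum]
    have hterm : ∀ S ∈ Finset.univ.powersetCard k,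
        Polynomial.eval l (∏ c ∈ S, f.comp (C c * X)) = ∏ c ∈ S, f.eval (c * l) := by
      intro S _
      rw [Polynomial.eval_prod]
      exact Finset.prod_congr rfl fun c _ => by rw [Polynomial.eval_comp]; simp
    rw [Finset.sum_congr rfl hterm, he,
      ← Finset.esymm_map_val (fun c => f.eval (c * l)), ← Finset.esymm_map_val (fun c => f.eval c)]
    congr 1
    have hmap : (Finset.univ.val.map fun c : F => f.eval (c * l)) =
        ((Finset.univ : Finset F).map (Equiv.mulRight₀ l hl).toEmbedding).val.map
          (fun c => f.eval c) := by
      rw [Finset.map_val, Multiset.map_map]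
      rfl
    rw [hmap, Finset.map_univ_equiv]
  have hPe : P = C e := by
    have hzero : P - C e = 0 := by
      apply Polynomial.eq_zero_of_natDegree_lt_card_of_eval_eq_zero' _ (Finset.univ.erase (0 : F))
      · intro a ha
        rw [Finset.mem_erase] at ha
        rw [Polynomial.eval_sub, Polynomial.eval_C, heval a ha.1, sub_self]
      · have hcarde : (Finset.univ.erase (0 : F)).card = q - 1 := by
          rw [Finset.card_erase_of_mem (Finset.mem_univ _), Finset.card_univ]
        rw [hcarde]
        calc (P - C e).natDegree ≤ max P.natDegree (C e).natDegree :=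
              Polynomial.natDegree_sub_le _ _
          _ ≤ k * n := by
              rw [Polynomial.natDegree_C]
              simpa using hPdeg
          _ < q - 1 := hkn
    exact sub_eq_zero.mp hzero
  have h0 : P.eval 0 = e := by rw [hPe, Polynomial.eval_C]
  have h0' : P.eval 0 = (q.choose k : F) * (f.eval 0) ^ k := by
    rw [hP, Polynomial.eval_finset_sum]
    have hterm : ∀ S ∈ Finset.univ.powersetCard k,
        Polynomial.eval 0 (∏ c ∈ S, f.comp (C c * X)) = (f.eval 0) ^ k := by
      intro S hS
      rw [Polynomial.eval_prod]
      have : ∀ c ∈ S, Polynomial.eval 0 (f.comp (C c * X)) = f.eval 0 := by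
        intro c _
        rw [Polynomial.eval_comp]
        simp
      rw [Finset.prod_congr rfl this, Finset.prod_const,
        Finset.mem_powersetCard_univ.mp hS]
    rw [Finset.sum_congr rfl hterm, Finset.sum_const, Finset.card_powersetCard,
      Finset.card_univ, nsmul_eq_mul]
  have hchoose : ((q.choose k : ℕ) : F) = 0 := by
    apply wan_cast_choose_eq_zero hk0.ne'
    calc k ≤ k * n := Nat.le_mul_of_pos_right _ hn
      _ < q - 1 := hkn
      _ < q := by omega
  rw [← h0, h0', hchoose, zero_mul]

theorem wan_value_set_bound {F : Type*} [Field F] [Fintype F] [DecidableEq F]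
    (f : F[X]) (n : ℕ) (hn : 0 < n) (hdeg : f.natDegree = n)
    (hf : ¬ Function.Bijective (fun c : F => f.eval c)) :
    (Finset.univ.image fun c : F => f.eval c).card ≤
      Fintype.card F - (Fintype.card F - 1) ⌈/⌉ n := by
  classical
  set q := Fintype.card F with hq
  have hq2 : 1 < q := Fintype.one_lt_card
  set t := (q - 1) ⌈/⌉ n with ht
  by_contra hcon
  push_neg at hcon
  set V := Finset.univ.image fun c : F => f.eval c with hV
  have ht1 : 1 ≤ t := by
    by_contra h
    push_neg at h
    have h0 : t ≤ 0 := by omega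
    have h1 : q - 1 ≤ n * 0 := (ceilDiv_le_iff_le_mul hn).mp h0
    omega
  have htq : t ≤ q - 1 := (ceilDiv_le_iff_le_mul hn).mpr (Nat.le_mul_of_pos_left _ hn)
  have htn : (t - 1) * n < q - 1 := by
    by_contra h
    push_neg at h
    have : t ≤ t - 1 := (ceilDiv_le_iff_le_mul hn).mpr (by rw [mul_comm] at h; exact h)
    omega
  set Fpoly : F[X] := ∏ c : F, (X - C (f.eval c)) with hF
  have hFmonic : Fpoly.Monic := monic_prod_of_monic _ _ fun c _ => monic_X_sub_C _
  have hFdeg : Fpoly.natDegree = q := by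
    rw [hF, Polynomial.natDegree_prod _ _ fun c _ => X_sub_C_ne_zero _]
    simp [Polynomial.natDegree_X_sub_C, Finset.card_univ]
    exact hq.symm
  have hcoeff : ∀ j, q - t < j → j < q → Fpoly.coeff j = 0 := by
    intro j hjt hjq
    have hcard : Multiset.card (Finset.univ.val.map fun c : F => f.eval c) = q := by
      rw [Multiset.card_map]
      exact Finset.card_univ
    have hrepr : Fpoly = ((Finset.univ.val.map fun c : F => f.eval c).map
        fun v => X - C v).prod := by
      rw [hF, Multiset.map_map, Finset.prod_eq_multiset_prod]
      rfl
    have hjcard : j ≤ Multiset.card (Finset.univ.val.map fun c : F => f.eval c) := by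
      rw [hcard]; omega
    rw [hrepr, Multiset.prod_X_sub_C_coeff _ hjcard, hcard, Finset.esymm_map_val]
    have hesymm : ∑ S ∈ Finset.univ.powersetCard (q - j), ∏ c ∈ S, f.eval c = 0 := by
      apply wan_esymm_eq_zero f (hdeg ▸ hn) (by omega)
      rw [hdeg]
      calc (q - j) * n ≤ (t - 1) * n := Nat.mul_le_mul_right _ (by omega)
        _ < q - 1 := htn
    rw [hesymm, mul_zero]
  set D : F[X] := Fpoly - (X ^ q - X) with hD
  have hDdeg : D.natDegree ≤ q - t := by
    rw [Polynomial.natDegree_le_iff_coeff_eq_zero]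
    intro j hj
    have hj2 : 2 ≤ j := by omega
    rw [hD, Polynomial.coeff_sub, Polynomial.coeff_sub, Polynomial.coeff_X_pow,
      Polynomial.coeff_X]
    rcases lt_trichotomy j q with h | h | h
    · rw [hcoeff j hj h, if_neg (by omega), if_neg (by omega)]
      ring
    · have hc1 : Fpoly.coeff j = 1 := by
        rw [h, ← hFdeg]; exact hFmonic.coeff_natDegree
      rw [hc1, if_pos h, if_neg (by omega)]
      ring
    · rw [Polynomial.coeff_eq_zero_of_natDegree_lt (by omega), if_neg (by omega),
        if_neg (by omega)]
      ring
  set g : F[X] := ∏ v ∈ V, (X - C v) with hg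
  have hgdeg : g.natDegree = V.card := by
    rw [hg, Polynomial.natDegree_prod _ _ fun v _ => X_sub_C_ne_zero _]
    simp [Polynomial.natDegree_X_sub_C]
  have hgF : g ∣ Fpoly := by
    refine dvd_trans ?_ Fpoly.prod_multiset_X_sub_C_dvd
    rw [hg, Finset.prod_eq_multiset_prod]
    refine Multiset.prod_dvd_prod_of_le (Multiset.map_le_map ?_)
    rw [Finset.val_le_iff_val_subset]
    intro v hv
    rw [Polynomial.mem_roots hFmonic.ne_zero]
    obtain ⟨c, _, hc⟩ := Finset.mem_image.mp (Finset.mem_val.mp hv)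
    rw [Polynomial.IsRoot.def, hF, Polynomial.eval_prod]
    exact Finset.prod_eq_zero (Finset.mem_univ c) (by simp [hc])
  have hgX : g ∣ (X ^ q - X : F[X]) := by
    refine dvd_trans ?_ (X ^ q - X : F[X]).prod_multiset_X_sub_C_dvd
    rw [hg, Finset.prod_eq_multiset_prod]
    refine Multiset.prod_dvd_prod_of_le (Multiset.map_le_map ?_)
    rw [FiniteField.roots_X_pow_card_sub_X F, Finset.val_le_iff]
    exact Finset.subset_univ V
  have hgD : g ∣ D := by rw [hD]; exact dvd_sub hgF hgX
  by_cases hD0 : D = 0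
  · have hFeq : Fpoly = X ^ q - X := sub_eq_zero.mp hD0
    have hsurj : Function.Surjective fun c : F => f.eval c := by
      intro a
      have hev : Polynomial.eval a Fpoly = 0 := by
        rw [hFeq]
        have hpow : a ^ q = a := by rw [hq]; exact FiniteField.pow_card a
        simp [hpow]
      rw [hF, Polynomial.eval_prod] at hev
      obtain ⟨c, _, hc⟩ := Finset.prod_eq_zero_iff.mp hev
      exact ⟨c, (sub_eq_zero.mp (by simpa using hc)).symm⟩
    exact hf (Finite.surjective_iff_bijective.mp hsurj)
  · have hle := Polynomial.natDegree_le_of_dvd hgD hD0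
    rw [hgdeg] at hle
    omega
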